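/- Let ω ∈ (0,1) be a quadratic irrational with F^[p](ω) = ω for some integer p ≥ 1, where F is the Gauss map F(x) = 1/x − ⌊1/x⌋. Then −1/ω' lies in (0,1), is a quadratic irrational, satisfies F^[p](−1/ω') = −1/ω', and for every integer t with 0 ≤ t ≤ p one has F^[t](−1/ω') = −1/(F^[p−t](ω))', where (·)' denotes Galois conjugation. -/

import Mathlib

/-- The Gauss map `x ↦ 1/x - ⌊1/x⌋` on irrationals in `(0,1)`, extended by `0` elsewhere. -/
noncomputable def gaussMap (x : ℝ) : ℝ :=
  open Classical in
  if Irrational x ∧ x ∈ Set.Ioo (0 : ℝ) 1 then 1 / x - ⌊1 / x⌋ else 0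

/-- `x` is a quadratic irrational. -/
def IsQuadraticIrrational (x : ℝ) : Prop :=
  Irrational x ∧ ∃ a b c : ℤ, a ≠ 0 ∧ (a : ℝ) * x ^ 2 + (b : ℝ) * x + (c : ℝ) = 0

lemma irr_conj {x : ℝ} (h : Irrational x) (a b : ℤ) : Irrational (-(b:ℝ)/a - x) := by
  have e : (-(b:ℝ)/a) = ((-b/a : ℚ) : ℝ) := by push_cast; ring
  rw [e]; exact h.ratCast_sub _

lemma conj_unique {x : ℝ} (hx : Irrational x) {a b c a' b' c' : ℤ} (ha : a ≠ 0) (ha' : a' ≠ 0)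
    (h1 : (a:ℝ)*x^2 + (b:ℝ)*x + (c:ℝ) = 0) (h2 : (a':ℝ)*x^2 + (b':ℝ)*x + (c':ℝ) = 0) :
    (-(b:ℝ)/a) = -(b':ℝ)/a' := by
  have key : ((a'*b - a*b' : ℤ) : ℝ) * x = ((a*c' - a'*c : ℤ) : ℝ) := by
    push_cast; linear_combination (a':ℝ) * h1 - (a:ℝ) * h2
  have hz : a'*b - a*b' = 0 := by
    by_contra h
    have hzr : ((a'*b - a*b' : ℤ):ℝ) ≠ 0 := Int.cast_ne_zero.mpr h
    have hxval : x = ((a*c' - a'*c : ℤ):ℝ) / ((a'*b - a*b' : ℤ):ℝ) := by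
      rw [eq_div_iff hzr]; linarith [key]
    set q : ℚ := ((a*c' - a'*c : ℤ) : ℚ) / ((a'*b - a*b' : ℤ) : ℚ) with hq
    have : x = (q : ℝ) := by rw [hq]; push_cast at hxval ⊢; exact hxval
    rw [this] at hx; exact Rat.not_irrational _ hx
  have hz' : (a':ℝ)*b = (a:ℝ)*b' := by exact_mod_cast sub_eq_zero.mp hz
  have haR : (a:ℝ) ≠ 0 := Int.cast_ne_zero.mpr ha
  have haR' : (a':ℝ) ≠ 0 := Int.cast_ne_zero.mpr ha'
  rw [div_eq_div_iff haR haR']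
  linear_combination -hz'

lemma irr_ne_conj {x : ℝ} (hx : Irrational x) {A B : ℤ} (hA : A ≠ 0) :
    x ≠ -(B:ℝ)/A - x := by
  intro h
  have haR : (A:ℝ) ≠ 0 := Int.cast_ne_zero.mpr hA
  field_simp at h
  have : x = (((-B : ℚ) / (2*A) : ℚ) : ℝ) := by
    push_cast
    rw [eq_div_iff (by simpa using haR : 2*(A:ℝ) ≠ 0)]
    linear_combination h
  rw [this] at hx
  exact Rat.not_irrational _ hx

lemma gauss_step {x : ℝ} (h1 : Irrational x) (h2 : x ∈ Set.Ioo (0:ℝ) 1) :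
    gaussMap x = 1/x - (⌊1/x⌋:ℝ) := by
  unfold gaussMap; rw [if_pos ⟨h1, h2⟩]

noncomputable def conjSeq (ω c0 : ℝ) : ℕ → ℝ
  | 0 => c0
  | t+1 => 1 / conjSeq ω c0 t - (⌊1 / gaussMap^[t] ω⌋ : ℝ)

lemma invariant (ω : ℝ) (hmem : ω ∈ Set.Ioo (0:ℝ) 1) (hirr : Irrational ω)
    (a b c : ℤ) (ha : a ≠ 0)
    (hroot : (a:ℝ)*ω^2 + (b:ℝ)*ω + (c:ℝ) = 0) :
    ∀ t : ℕ, (gaussMap^[t] ω ∈ Set.Ioo (0:ℝ) 1) ∧ Irrational (gaussMap^[t] ω) ∧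
      ∃ A B C : ℤ, A ≠ 0 ∧
        (A:ℝ)*(gaussMap^[t] ω)^2 + (B:ℝ)*(gaussMap^[t] ω) + (C:ℝ) = 0 ∧
        conjSeq ω (-(b:ℝ)/a - ω) t = -(B:ℝ)/(A:ℝ) - gaussMap^[t] ω := by
  intro t
  induction t with
  | zero => exact ⟨hmem, hirr, a, b, c, ha, hroot, rfl⟩
  | succ t ih =>
    obtain ⟨hx, hxirr, A, B, C, hA, hq, hconj⟩ := ih
    set x := gaussMap^[t] ω with hxdef
    obtain ⟨hx0, hx1⟩ := hx
    have hxne : x ≠ 0 := ne_of_gt hx0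
    have hAr : (A:ℝ) ≠ 0 := Int.cast_ne_zero.mpr hA
    set n : ℤ := ⌊1/x⌋ with hn
    have hinv1 : 1 < 1/x := (one_lt_div hx0).mpr hx1
    have hn1 : 1 ≤ n := Int.le_floor.mpr (by exact_mod_cast hinv1.le)
    have hyirr : Irrational (1/x - (n:ℝ)) := by
      have h1 : Irrational (1/x) := by rw [one_div]; exact hxirr.inv
      exact h1.sub_intCast n
    have hy0 : 0 ≤ 1/x - (n:ℝ) := by
      have := Int.floor_le (1/x); rw [hn]; linarith
    have hy1 : 1/x - (n:ℝ) < 1 := by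
      have := Int.lt_floor_add_one (1/x); rw [hn]; linarith
    have hy0' : 0 < 1/x - (n:ℝ) := hy0.lt_of_ne (fun h => hyirr ⟨0, by rw [← h]; simp⟩)
    have hstep : gaussMap^[t+1] ω = 1/x - (n:ℝ) := by
      rw [Function.iterate_succ_apply', ← hxdef]
      unfold gaussMap
      rw [if_pos ⟨hxirr, hx0, hx1⟩]
    set ct := conjSeq ω (-(b:ℝ)/a - ω) t with hct
    have hctval : ct = -(B:ℝ)/A - x := hconj
    have hctirr : Irrational ct := by rw [hctval]; exact irr_conj hxirr A B
    have hctne : ct ≠ 0 := by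
      intro h; rw [h] at hctirr; exact not_irrational_zero hctirr
    have hCr : (C:ℝ) = (A:ℝ) * x * ct := by
      rw [hctval]; field_simp; linear_combination hq
    have hCne : C ≠ 0 := by
      have h2 : (C:ℝ) ≠ 0 := by
        rw [hCr]; exact mul_ne_zero (mul_ne_zero hAr hxne) hctne
      exact_mod_cast h2
    have hCr' : (C:ℝ) ≠ 0 := Int.cast_ne_zero.mpr hCne
    refine ⟨⟨by rw [hstep]; exact hy0', by rw [hstep]; exact hy1⟩,
      by rw [hstep]; exact hyirr, C, B + 2*C*n, A + B*n + C*n^2, hCne, ?_, ?_⟩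
    · rw [hstep]; push_cast; field_simp
      linear_combination hq
    · have hrec : conjSeq ω (-(b:ℝ)/a - ω) (t+1) = 1/ct - (n:ℝ) := rfl
      rw [hrec, hstep]
      push_cast
      have hctA : (A:ℝ)*ct = -(B:ℝ) - (A:ℝ)*x := by
        rw [hctval]; field_simp
      field_simp
      linear_combination x*hCr + ct*hCr + x*ct*hctA

/-- Second half of Galois' theorem: if `ω ∈ (0,1)` is a purely periodic quadratic
irrational of period `p` for the Gauss map `F`, then `-1/ω'` lies in `(0,1)`, is a quadratic
irrational, is purely periodic of period `p`, and `F^[t](-1/ω') = -1/(F^[p-t](ω))'`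
for `0 ≤ t ≤ p`, where `'` denotes Galois conjugation. -/
theorem gauss_dual_of_purely_periodic
    (ω : ℝ) (hmem : ω ∈ Set.Ioo (0 : ℝ) 1) (hirr : Irrational ω)
    (a b c : ℤ) (ha : a ≠ 0)
    (hroot : (a : ℝ) * ω ^ 2 + (b : ℝ) * ω + (c : ℝ) = 0)
    (p : ℕ) (hp : 1 ≤ p) (hper : gaussMap^[p] ω = ω) :
    -1 / (-(b : ℝ) / (a : ℝ) - ω) ∈ Set.Ioo (0 : ℝ) 1 ∧
    IsQuadraticIrrational (-1 / (-(b : ℝ) / (a : ℝ) - ω)) ∧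
    gaussMap^[p] (-1 / (-(b : ℝ) / (a : ℝ) - ω)) = -1 / (-(b : ℝ) / (a : ℝ) - ω) ∧
    ∀ t : ℕ, t ≤ p →
      ∀ a' b' c' : ℤ, a' ≠ 0 →
        (a' : ℝ) * (gaussMap^[p - t] ω) ^ 2 + (b' : ℝ) * (gaussMap^[p - t] ω) + (c' : ℝ) = 0 →
        gaussMap^[t] (-1 / (-(b : ℝ) / (a : ℝ) - ω)) =
          -1 / (-(b' : ℝ) / (a' : ℝ) - gaussMap^[p - t] ω) := by
  set c0 : ℝ := -(b:ℝ)/(a:ℝ) - ω with hc0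
  set cs : ℕ → ℝ := conjSeq ω c0 with hcs
  have inv := invariant ω hmem hirr a b c ha hroot
  have hmemt : ∀ t, gaussMap^[t] ω ∈ Set.Ioo (0:ℝ) 1 := fun t => (inv t).1
  have hirrt : ∀ t, Irrational (gaussMap^[t] ω) := fun t => (inv t).2.1
  have hcsirr : ∀ t, Irrational (cs t) := by
    intro t; obtain ⟨_, hxi, A, B, C, hA, hq, hc⟩ := inv t
    rw [hcs, hc]; exact irr_conj hxi A B
  have hcsne : ∀ t, cs t ≠ 0 := by
    intro t h; have := hcsirr t; rw [h] at this; exact not_irrational_zero this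
  have hnet : ∀ t, gaussMap^[t] ω ≠ cs t := by
    intro t; obtain ⟨_, hxi, A, B, C, hA, hq, hc⟩ := inv t
    rw [hcs, hc]; exact irr_ne_conj hxi hA
  have hn1 : ∀ t, 1 ≤ ⌊1/(gaussMap^[t] ω)⌋ := by
    intro t
    have h0 := (hmemt t).1
    have h1 := (hmemt t).2
    exact Int.le_floor.mpr (by exact_mod_cast ((one_lt_div h0).mpr h1).le)
  have hrec : ∀ t, cs (t+1) = 1/cs t - (⌊1/(gaussMap^[t] ω)⌋:ℝ) := fun t => rfl
  have hgstep : ∀ t, gaussMap^[t+1] ω = 1/(gaussMap^[t] ω) - (⌊1/(gaussMap^[t] ω)⌋:ℝ) := by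
    intro t
    rw [Function.iterate_succ_apply', gauss_step (hirrt t) (hmemt t)]
  have hωper : ∀ t, gaussMap^[t+p] ω = gaussMap^[t] ω := by
    intro t; rw [Function.iterate_add_apply, hper]
  have hper1 : ∀ t, cs (t+p) = cs t := by
    intro t
    obtain ⟨_, _, A, B, C, hA, hq, hc⟩ := inv (t+p)
    obtain ⟨_, hxi, A', B', C', hA', hq', hc'⟩ := inv t
    rw [hωper t] at hq hc
    have := conj_unique hxi hA hA' hq hq'
    rw [hcs, hc, hc', this]
  -- eventually some conjugate is negative
  have hexneg : ∃ t, cs t < 0 := by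
    by_contra h
    push_neg at h
    have hpos : ∀ t, 0 < cs t := fun t => (h t).lt_of_ne (fun e => hcsne t e.symm)
    have hle1 : ∀ t, cs t ≤ 1 := by
      intro t
      have h2 := h (t+1)
      rw [hrec t] at h2
      have hn := hn1 t
      have hn' : (1:ℝ) ≤ (⌊1/(gaussMap^[t] ω)⌋:ℝ) := by exact_mod_cast hn
      have h3 : 1 ≤ 1/cs t := by linarith
      have := (le_div_iff₀ (hpos t)).mp h3
      linarith
    set δ : ℕ → ℝ := fun t => |gaussMap^[t] ω - cs t| with hδ
    have hδpos : ∀ t, 0 < δ t := fun t => abs_pos.mpr (sub_ne_zero.mpr (hnet t))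
    have hmono : StrictMono δ := by
      apply strictMono_nat_of_lt_succ
      intro t
      have hx0 := (hmemt t).1
      have hx1 := (hmemt t).2
      have hdiff : gaussMap^[t+1] ω - cs (t+1)
          = (cs t - gaussMap^[t] ω)/((gaussMap^[t] ω) * cs t) := by
        rw [hgstep t, hrec t]
        field_simp [hcsne t, ne_of_gt hx0]
        ring
      have habs : δ (t+1) = δ t / ((gaussMap^[t] ω) * cs t) := by
        rw [hδ]; simp only []
        rw [hdiff, abs_div, abs_of_pos (mul_pos hx0 (hpos t)),
          abs_sub_comm]
      rw [habs]
      have hd1 : (gaussMap^[t] ω) * cs t < 1 := by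
        calc (gaussMap^[t] ω) * cs t < 1 * cs t := by
              apply mul_lt_mul_of_pos_right hx1 (hpos t)
          _ ≤ 1 := by rw [one_mul]; exact hle1 t
      rw [lt_div_iff₀ (mul_pos hx0 (hpos t))]
      exact mul_lt_of_lt_one_right (hδpos t) hd1
    have h1 : δ 0 < δ p := hmono (by omega)
    have h2 : δ p = δ 0 := by
      rw [hδ]; simp only []
      have e1 : gaussMap^[p] ω = gaussMap^[0] ω := hper
      have e2 : cs p = cs 0 := by have := hper1 0; rwa [zero_add] at this
      rw [e1, e2]
    linarith
  obtain ⟨t₀, ht₀⟩ := hexneg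
  have hnegstep : ∀ t, cs t < 0 → cs (t+1) < -1 := by
    intro t h
    rw [hrec t]
    have h1 : 1/cs t < 0 := by
      exact div_neg_of_pos_of_neg one_pos h
    have hn' : (1:ℝ) ≤ (⌊1/(gaussMap^[t] ω)⌋:ℝ) := by exact_mod_cast hn1 t
    linarith
  have hall : ∀ s, cs (t₀ + 1 + s) < -1 := by
    intro s
    induction s with
    | zero => exact hnegstep t₀ ht₀
    | succ s ih =>
      exact hnegstep (t₀ + 1 + s) (by linarith)
  have hperk : ∀ k t, cs (t + k*p) = cs t := by
    intro k
    induction k with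
    | zero => intro t; simp
    | succ k ih =>
      intro t
      have e : t + (k+1)*p = (t + k*p) + p := by ring
      rw [e, hper1, ih]
  have hcsneg : ∀ t, cs t < -1 := by
    intro t
    have hk : t₀ + 1 ≤ (t₀+1)*p := Nat.le_mul_of_pos_right _ hp
    obtain ⟨s, hs⟩ : ∃ s, t + (t₀+1)*p = t₀ + 1 + s := ⟨t + (t₀+1)*p - (t₀+1), by omega⟩
    have h2 := hall s
    rw [← hs, hperk (t₀+1) t] at h2
    exact h2
  -- the dual orbit
  set η : ℕ → ℝ := fun t => -1/cs t with hη
  have hηmem : ∀ t, η t ∈ Set.Ioo (0:ℝ) 1 := by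
    intro t
    have h1 : (0:ℝ) < -cs t := by linarith [hcsneg t]
    have h1' : (1:ℝ) < -cs t := by linarith [hcsneg t]
    have e : η t = 1/(-cs t) := by rw [hη]; ring_nf
    rw [e]
    exact ⟨by positivity, by rw [div_lt_one h1]; exact h1'⟩
  have hηirr : ∀ t, Irrational (η t) := by
    intro t
    have e : η t = -(cs t)⁻¹ := by rw [hη]; ring_nf
    rw [e]; exact (hcsirr t).inv.neg
  have hηinv : ∀ t, 1/η (t+1) = (⌊1/(gaussMap^[t] ω)⌋:ℝ) + η t := by
    intro t
    have h2 := hcsne (t+1)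
    have e : 1/η (t+1) = -cs (t+1) := by rw [hη]; field_simp
    rw [e, hrec t, hη]
    ring
  have hηfloor : ∀ t, ⌊1/η (t+1)⌋ = ⌊1/(gaussMap^[t] ω)⌋ := by
    intro t
    rw [hηinv t, Int.floor_intCast_add, Int.floor_eq_zero_iff.mpr
      ⟨(hηmem t).1.le, (hηmem t).2⟩, add_zero]
  have hηstep : ∀ t, gaussMap (η (t+1)) = η t := by
    intro t
    rw [gauss_step (hηirr (t+1)) (hηmem (t+1)), hηfloor t, hηinv t]
    ring
  have hηiter : ∀ t, t ≤ p → gaussMap^[t] (η p) = η (p - t) := by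
    intro t
    induction t with
    | zero => intro _; simp
    | succ t ih =>
      intro ht
      rw [Function.iterate_succ_apply', ih (Nat.le_of_succ_le ht)]
      have e : p - t = (p - (t+1)) + 1 := by omega
      rw [e, hηstep]
  have hηp0 : η p = η 0 := by
    rw [hη]; simp only []
    have := hper1 0; rw [zero_add] at this; rw [this]
  have hgoalval : -1 / (-(b:ℝ)/(a:ℝ) - ω) = η 0 := rfl
  rw [hgoalval]
  refine ⟨hηmem 0, ⟨hηirr 0, ?_⟩, ?_, ?_⟩
  · -- quadratic for η 0
    have hωne : ω ≠ 0 := fun h => by rw [h] at hirr; exact not_irrational_zero hirr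
    have hc0irr : Irrational c0 := hcsirr 0
    have hc0ne : c0 ≠ 0 := hcsne 0
    have haR : (a:ℝ) ≠ 0 := Int.cast_ne_zero.mpr ha
    have hfrac : (a:ℝ)*(-(b:ℝ)/(a:ℝ)) = -(b:ℝ) := by field_simp
    have hcR : (c:ℝ) = (a:ℝ) * ω * c0 := by
      rw [hc0]; linear_combination hroot - ω*hfrac
    have hcne : c ≠ 0 := by
      have h2 : (c:ℝ) ≠ 0 := by
        rw [hcR]; exact mul_ne_zero (mul_ne_zero haR hωne) hc0ne
      exact_mod_cast h2
    have hcR' : (c:ℝ) ≠ 0 := Int.cast_ne_zero.mpr hcne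
    have hc0root : (a:ℝ)*c0^2 + (b:ℝ)*c0 + (c:ℝ) = 0 := by
      rw [hc0]; linear_combination ((-(b:ℝ)/(a:ℝ)) - 2*ω)*hfrac + hroot
    refine ⟨c, -b, a, hcne, ?_⟩
    have e : η 0 = -1/c0 := rfl
    rw [e]
    push_cast
    have expand : (c:ℝ)*(-1/c0)^2 + (-(b:ℝ))*(-1/c0) + (a:ℝ)
        = ((a:ℝ)*c0^2 + (b:ℝ)*c0 + (c:ℝ))/c0^2 := by
      field_simp
      ring
    rw [expand, hc0root, zero_div]
  · -- periodicity
    rw [← hηp0, hηiter p le_rfl, Nat.sub_self]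
    exact hηp0.symm
  · -- the conjugate orbit identification
    intro t ht a' b' c' ha' hq'
    rw [← hηp0, hηiter t ht]
    obtain ⟨_, hxi, A, B, C, hA, hq, hc⟩ := inv (p - t)
    have huniq := conj_unique hxi hA ha' hq hq'
    have e : η (p - t) = -1/cs (p - t) := rfl
    rw [e, hcs, hc, huniq]
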